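/- For the complete {2,r}-hypergraph K_t^{{2,r}} on t vertices and positive constant α_r, the maximum over the standard simplex of L(x) = Σ_{i<j} x_i x_j + α_r Σ_{|e|=r, e ⊆ [t]} Π_{i ∈ e} x_i equals (t-1)/(2t) + α_r · Π_{i=1}^{r-1}(t-i) / (r! t^{r-1}), attained at the uniform weighting x_i = 1/t. -/

import Mathlib

open Finset

def stdSimplex' (n : ℕ) : Set (Fin n → ℝ) :=
  {x | (∀ i, 0 ≤ x i) ∧ ∑ i, x i = 1}

section Aux

lemma sum_powersetCard_insert' {α : Type*} [DecidableEq α] (s : Finset α) {a : α} (ha : a ∉ s)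
    (x : α → ℝ) (k : ℕ) :
    ∑ e ∈ (insert a s).powersetCard (k + 1), ∏ i ∈ e, x i
      = (∑ e ∈ s.powersetCard (k + 1), ∏ i ∈ e, x i)
        + x a * ∑ e ∈ s.powersetCard k, ∏ i ∈ e, x i := by
  rw [Finset.powersetCard_succ_insert ha, Finset.sum_union, Finset.sum_image, Finset.mul_sum]
  · congr 1
    refine Finset.sum_congr rfl fun e he => ?_
    exact Finset.prod_insert fun hae => ha ((Finset.mem_powersetCard.1 he).1 hae)
  · intro e he e' he' h
    have hae : a ∉ e := fun h' => ha ((Finset.mem_powersetCard.1 he).1 h')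
    have hae' : a ∉ e' := fun h' => ha ((Finset.mem_powersetCard.1 he').1 h')
    rw [← Finset.erase_insert hae, h, Finset.erase_insert hae']
  · refine Finset.disjoint_left.2 fun e he he' => ?_
    obtain ⟨e', he', rfl⟩ := Finset.mem_image.1 he'
    exact ha ((Finset.mem_powersetCard.1 he).1 (Finset.mem_insert_self a e'))

lemma sum_powersetCard_pair' {α : Type*} [DecidableEq α] (s : Finset α) {i j : α}
    (hi : i ∉ s) (hj : j ∉ s) (hij : i ≠ j) (x : α → ℝ) (k : ℕ) :
    ∑ e ∈ (insert i (insert j s)).powersetCard (k + 2), ∏ a ∈ e, x a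
      = (∑ e ∈ s.powersetCard (k + 2), ∏ a ∈ e, x a)
        + (x i + x j) * (∑ e ∈ s.powersetCard (k + 1), ∏ a ∈ e, x a)
        + x i * x j * (∑ e ∈ s.powersetCard k, ∏ a ∈ e, x a) := by
  have hi' : i ∉ insert j s := by simp [hij, hi]
  rw [show k + 2 = (k + 1) + 1 from rfl, sum_powersetCard_insert' _ hi' x (k + 1),
    sum_powersetCard_insert' s hj x (k + 1), sum_powersetCard_insert' s hj x k]
  ring

lemma sum_powersetCard_const' (t k : ℕ) :
    ∑ e ∈ (univ : Finset (Fin t)).powersetCard k, ∏ _i ∈ e, ((1 : ℝ) / t)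
      = (t.choose k : ℝ) * (1 / t) ^ k := by
  have h : ∀ e ∈ (univ : Finset (Fin t)).powersetCard k,
      ∏ _i ∈ e, ((1 : ℝ) / t) = (1 / (t : ℝ)) ^ k := fun e he => by
    rw [Finset.prod_const, (Finset.mem_powersetCard.1 he).2]
  rw [Finset.sum_congr rfl h, Finset.sum_const, Finset.card_powersetCard, Finset.card_univ,
    Fintype.card_fin, nsmul_eq_mul]

lemma prod_Icc_one_eq_prod_range' (f : ℕ → ℝ) (m : ℕ) :
    ∏ i ∈ Finset.Icc 1 m, f i = ∏ i ∈ Finset.range m, f (i + 1) := by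
  induction m with
  | zero => simp
  | succ n ih => rw [Finset.prod_range_succ, ← ih, Finset.prod_Icc_succ_top (by omega)]

lemma choose_cast_eq' (t r : ℕ) (hr : 1 ≤ r) :
    (t.choose r : ℝ) = (t : ℝ) * (∏ i ∈ Finset.Icc 1 (r - 1), ((t : ℝ) - i)) / r.factorial := by
  have hfac : (r.factorial : ℝ) ≠ 0 := Nat.cast_ne_zero.2 r.factorial_ne_zero
  rw [eq_div_iff hfac]
  have key : ((t.descFactorial r : ℕ) : ℝ) = ∏ i ∈ Finset.range r, ((t : ℝ) - i) := by
    rw [Finset.prod_range_natCast_sub, ← Nat.descFactorial_eq_prod_range]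
  have h2 : ∏ i ∈ Finset.range r, ((t : ℝ) - i)
      = (t : ℝ) * ∏ i ∈ Finset.Icc 1 (r - 1), ((t : ℝ) - i) := by
    rw [prod_Icc_one_eq_prod_range']
    rw [show r = (r - 1) + 1 by omega, Finset.prod_range_succ']
    push_cast
    ring
  have h3 : t.descFactorial r = r.factorial * t.choose r :=
    Nat.descFactorial_eq_factorial_mul_choose t r
  rw [h3] at key
  push_cast at key
  rw [← h2, ← key]
  ring

/-- The Lagrangian. -/
noncomputable def Lfun (t r : ℕ) (αr : ℝ) (x : Fin t → ℝ) : ℝ :=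
  (∑ e ∈ (univ : Finset (Fin t)).powersetCard 2, ∏ i ∈ e, x i)
    + αr * ∑ e ∈ (univ : Finset (Fin t)).powersetCard r, ∏ i ∈ e, x i

lemma Lfun_continuous (t r : ℕ) (αr : ℝ) : Continuous (Lfun t r αr) := by
  unfold Lfun
  exact (continuous_finset_sum _ fun e _ =>
      continuous_finset_prod _ fun a _ => continuous_apply a).add
    (continuous_const.mul (continuous_finset_sum _ fun e _ =>
      continuous_finset_prod _ fun a _ => continuous_apply a))

lemma smoothing (t r : ℕ) (hr : 3 ≤ r) (αr : ℝ) (hαr : 0 < αr) (x : Fin t → ℝ)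
    (hx : x ∈ stdSimplex' t) {i j : Fin t} (hij : i ≠ j) (hne : x i ≠ x j) :
    ∃ u ∈ stdSimplex' t, Lfun t r αr x < Lfun t r αr u := by
  obtain ⟨hxnn, hxsum⟩ := hx
  set u : Fin t → ℝ :=
    Function.update (Function.update x j ((x i + x j) / 2)) i ((x i + x j) / 2) with hu
  have hui : u i = (x i + x j) / 2 := by rw [hu, Function.update_self]
  have huj : u j = (x i + x j) / 2 := by
    rw [hu, Function.update_of_ne hij.symm, Function.update_self]
  have huo : ∀ a, a ≠ i → a ≠ j → u a = x a := fun a hai haj => by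
    rw [hu, Function.update_of_ne hai, Function.update_of_ne haj]
  set s : Finset (Fin t) := (univ.erase i).erase j with hs
  have his : i ∉ s := fun h => (Finset.notMem_erase i univ) (Finset.mem_of_mem_erase h)
  have hjs : j ∉ s := Finset.notMem_erase j _
  have hins : insert i (insert j s) = univ := by
    rw [hs, Finset.insert_erase (Finset.mem_erase.2 ⟨hij.symm, Finset.mem_univ j⟩),
      Finset.insert_erase (Finset.mem_univ i)]
  have hmem : ∀ a ∈ s, a ≠ i ∧ a ≠ j := fun a ha =>
    ⟨fun h => his (h ▸ ha), fun h => hjs (h ▸ ha)⟩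
  have hsum_u : ∀ k', ∑ e ∈ s.powersetCard k', ∏ a ∈ e, u a
      = ∑ e ∈ s.powersetCard k', ∏ a ∈ e, x a := by
    intro k'
    refine Finset.sum_congr rfl fun e he => Finset.prod_congr rfl fun a ha => ?_
    obtain ⟨h1, h2⟩ := hmem a ((Finset.mem_powersetCard.1 he).1 ha)
    exact huo a h1 h2
  have hAnn : ∀ k', (0:ℝ) ≤ ∑ e ∈ s.powersetCard k', ∏ a ∈ e, x a := fun k' =>
    Finset.sum_nonneg fun e _ => Finset.prod_nonneg fun a _ => hxnn a
  obtain ⟨k, hk⟩ : ∃ k, r = k + 2 := ⟨r - 2, by omega⟩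
  have hA0 : ∑ e ∈ s.powersetCard 0, ∏ a ∈ e, x a = 1 := by simp
  have dx2 := sum_powersetCard_pair' s his hjs hij x 0
  have dxr := sum_powersetCard_pair' s his hjs hij x k
  have du2 := sum_powersetCard_pair' s his hjs hij u 0
  have dur := sum_powersetCard_pair' s his hjs hij u k
  rw [hins] at dx2 dxr du2 dur
  simp only [hsum_u, hui, huj] at du2 dur
  simp only [Nat.zero_add, hA0] at dx2 du2
  have hmemu : u ∈ stdSimplex' t := by
    constructor
    · intro a
      rcases eq_or_ne a i with h | hai
      · rw [h, hui]; linarith [hxnn i, hxnn j]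
      rcases eq_or_ne a j with h | haj
      · rw [h, huj]; linarith [hxnn i, hxnn j]
      · rw [huo a hai haj]; exact hxnn a
    · have hi' : i ∉ insert j s := by simp [hij, his]
      have hx' : ∑ a ∈ insert i (insert j s), x a = 1 := by rw [hins]; exact hxsum
      rw [Finset.sum_insert hi', Finset.sum_insert hjs] at hx'
      have hss : ∑ a ∈ s, u a = ∑ a ∈ s, x a :=
        Finset.sum_congr rfl fun a ha => huo a (hmem a ha).1 (hmem a ha).2
      calc ∑ a, u a = ∑ a ∈ insert i (insert j s), u a := by rw [hins]
        _ = u i + (u j + ∑ a ∈ s, u a) := by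
            rw [Finset.sum_insert hi', Finset.sum_insert hjs]
        _ = 1 := by rw [hui, huj, hss]; linarith [hx']
  refine ⟨u, hmemu, ?_⟩
  have hd : (0:ℝ) < ((x i - x j) / 2) ^ 2 := by
    have h3 : (x i - x j) / 2 ≠ 0 := by
      simp only [div_ne_zero_iff]
      exact ⟨sub_ne_zero.2 hne, two_ne_zero⟩
    exact lt_of_le_of_ne (sq_nonneg _) (Ne.symm (pow_ne_zero 2 h3))
  have hpos1 : (0:ℝ) < 1 + αr * ∑ e ∈ s.powersetCard k, ∏ a ∈ e, x a := by
    nlinarith [mul_nonneg hαr.le (hAnn k)]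
  unfold Lfun
  rw [hk, dx2, dxr, du2, dur]
  nlinarith [mul_pos hd hpos1]

lemma uniform_mem (t : ℕ) (ht : 1 ≤ t) : (fun _ => (1:ℝ)/t) ∈ stdSimplex' t := by
  have ht0 : (t:ℝ) ≠ 0 := Nat.cast_ne_zero.2 (by omega)
  constructor
  · intro i; positivity
  · rw [Finset.sum_const, Finset.card_univ, Fintype.card_fin, nsmul_eq_mul]
    field_simp

lemma upper_bound (t r : ℕ) (ht : 1 ≤ t) (hr : 3 ≤ r) (αr : ℝ) (hαr : 0 < αr) :
    ∀ x ∈ stdSimplex' t, Lfun t r αr x ≤ Lfun t r αr (fun _ => (1:ℝ)/t) := by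
  have hset : stdSimplex' t = stdSimplex ℝ (Fin t) := rfl
  have hcomp : IsCompact (stdSimplex' t) := by rw [hset]; exact isCompact_stdSimplex ℝ (Fin t)
  have hne : (stdSimplex' t).Nonempty := ⟨_, uniform_mem t ht⟩
  obtain ⟨x₀, hx₀, hmax⟩ :=
    hcomp.exists_isMaxOn hne (Lfun_continuous t r αr).continuousOn
  intro x hx
  have h1 : Lfun t r αr x ≤ Lfun t r αr x₀ := hmax hx
  have hconst : ∀ a b : Fin t, x₀ a = x₀ b := by
    intro a b
    by_contra hne'
    have hab : a ≠ b := fun h => hne' (by rw [h])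
    obtain ⟨u, hu, hlt⟩ := smoothing t r hr αr hαr x₀ hx₀ hab hne'
    exact absurd (hmax hu) (not_le.2 hlt)
  have hx₀eq : x₀ = fun _ => (1:ℝ)/t := by
    funext a
    have hsum : ∑ b, x₀ b = 1 := hx₀.2
    have heq : ∑ b, x₀ b = ∑ _b : Fin t, x₀ a := Finset.sum_congr rfl fun b _ => hconst b a
    rw [heq, Finset.sum_const, Finset.card_univ, Fintype.card_fin, nsmul_eq_mul] at hsum
    have ht0 : (t:ℝ) ≠ 0 := Nat.cast_ne_zero.2 (by omega)
    rw [eq_div_iff ht0]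
    linarith [hsum]
  rw [hx₀eq] at h1
  exact h1

lemma value_eq (t r : ℕ) (ht : 1 ≤ t) (hr : 3 ≤ r) (αr : ℝ) :
    ((∑ e ∈ (univ : Finset (Fin t)).powersetCard 2, ∏ _i ∈ e, ((1 : ℝ) / t))
        + αr * ∑ e ∈ (univ : Finset (Fin t)).powersetCard r, ∏ _i ∈ e, ((1 : ℝ) / t))
      = ((t : ℝ) - 1) / (2 * t)
        + αr * (∏ i ∈ Finset.Icc 1 (r - 1), ((t : ℝ) - i)) / (Nat.factorial r * (t : ℝ) ^ (r - 1)) := by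
  have ht0 : (t:ℝ) ≠ 0 := Nat.cast_ne_zero.2 (by omega)
  have hfac : (r.factorial : ℝ) ≠ 0 := Nat.cast_ne_zero.2 r.factorial_ne_zero
  rw [sum_powersetCard_const' t 2, sum_powersetCard_const' t r, Nat.cast_choose_two,
    choose_cast_eq' t r (by omega)]
  obtain ⟨k, hk⟩ : ∃ k, r = k + 1 := ⟨r - 1, by omega⟩
  subst hk
  simp only [Nat.add_sub_cancel, pow_succ]
  field_simp
  have hinv : (t:ℝ)^k * ((t:ℝ)⁻¹)^k = 1 := by rw [← mul_pow, mul_inv_cancel₀ ht0, one_pow]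
  linear_combination (2 * t * αr * ∏ x ∈ Icc 1 k, ((t:ℝ) - x)) * hinv

end Aux

/-- The weighted Lagrangian of the complete `{2,r}`-hypergraph on `t` vertices. -/
theorem stmt_5 (t r : ℕ) (ht : 1 ≤ t) (hr : 3 ≤ r) (αr : ℝ) (hαr : 0 < αr) :
    IsGreatest {y : ℝ | ∃ x ∈ stdSimplex' t,
        y = (∑ e ∈ (univ : Finset (Fin t)).powersetCard 2, ∏ i ∈ e, x i)
          + αr * ∑ e ∈ (univ : Finset (Fin t)).powersetCard r, ∏ i ∈ e, x i}
      (((t : ℝ) - 1) / (2 * t)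
        + αr * (∏ i ∈ Finset.Icc 1 (r - 1), ((t : ℝ) - i)) / (Nat.factorial r * (t : ℝ) ^ (r - 1))) ∧
    ((∑ e ∈ (univ : Finset (Fin t)).powersetCard 2, ∏ _i ∈ e, ((1 : ℝ) / t))
        + αr * ∑ e ∈ (univ : Finset (Fin t)).powersetCard r, ∏ _i ∈ e, ((1 : ℝ) / t))
      = ((t : ℝ) - 1) / (2 * t)
        + αr * (∏ i ∈ Finset.Icc 1 (r - 1), ((t : ℝ) - i)) / (Nat.factorial r * (t : ℝ) ^ (r - 1)) := by
  have hval := value_eq t r ht hr αr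
  refine ⟨⟨⟨fun _ => (1:ℝ)/t, uniform_mem t ht, hval.symm⟩, ?_⟩, hval⟩
  rintro y ⟨x, hx, rfl⟩
  calc (∑ e ∈ (univ : Finset (Fin t)).powersetCard 2, ∏ i ∈ e, x i)
        + αr * ∑ e ∈ (univ : Finset (Fin t)).powersetCard r, ∏ i ∈ e, x i
      = Lfun t r αr x := rfl
    _ ≤ Lfun t r αr (fun _ => (1:ℝ)/t) := upper_bound t r ht hr αr hαr x hx
    _ = _ := hval
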